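/- In dimension one the following inequality fails: it is NOT true that there exists a constant C > 0 such that for all n and all coefficients α_I ∈ {0,1} indexed by dyadic intervals I ⊆ [0,1) with |I| ≥ 2^{-n}, one has sup_{x∈[0,1)} |Σ_{|I|≥2^{-n}} α_I h_I(x)| ≥ C · Σ_{|I|≥2^{-n}} |α_I|·|I|. Specifically, for each n there is a choice of α_I ∈ {0,1} with sup norm at most n^{2/3} while Σ |α_I||I| ≳ n. -/

import Mathlib

open Finset

noncomputable def haar (k m : ℕ) (x : ℝ) : ℝ :=
  if (m : ℝ) / 2 ^ k ≤ x ∧ x < ((m : ℝ) + 1) / 2 ^ k then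
    (if x < (2 * (m : ℝ) + 1) / 2 ^ (k + 1) then -1 else 1)
  else 0

noncomputable def sum1 (n : ℕ) (α : ℕ → ℕ → ℝ) (x : ℝ) : ℝ :=
  ∑ k ∈ Finset.range (n + 1), ∑ m ∈ Finset.range (2 ^ k), α k m * haar k m x

noncomputable def walkT (T : ℝ) : ℕ → ℕ → ℝ
  | 0, _ => 0
  | (k+1), m =>
      walkT T k (m / 2) +
        (if |walkT T k (m / 2)| < T then 2 * ((m % 2 : ℕ) : ℝ) - 1 else 0)

noncomputable def alphaT (T : ℝ) (k m : ℕ) : ℝ :=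
  if |walkT T k m| < T then 1 else 0

lemma walkT_zero (T : ℝ) (m : ℕ) : walkT T 0 m = 0 := rfl

lemma walkT_succ (T : ℝ) (k m : ℕ) :
    walkT T (k+1) m = walkT T k (m / 2) + alphaT T k (m / 2) * (2 * ((m % 2 : ℕ) : ℝ) - 1) := by
  rw [walkT, alphaT]
  split_ifs <;> ring

lemma alphaT_cases (T : ℝ) (k m : ℕ) : alphaT T k m = 0 ∨ alphaT T k m = 1 := by
  unfold alphaT; split_ifs <;> simp

lemma alphaT_nonneg (T : ℝ) (k m : ℕ) : 0 ≤ alphaT T k m := by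
  rcases alphaT_cases T k m with h | h <;> rw [h] <;> norm_num

lemma alphaT_le_one (T : ℝ) (k m : ℕ) : alphaT T k m ≤ 1 := by
  rcases alphaT_cases T k m with h | h <;> rw [h] <;> norm_num

lemma abs_alphaT (T : ℝ) (k m : ℕ) : |alphaT T k m| = alphaT T k m :=
  abs_of_nonneg (alphaT_nonneg T k m)

lemma alphaT_sq (T : ℝ) (k m : ℕ) : alphaT T k m ^ 2 = alphaT T k m := by
  rcases alphaT_cases T k m with h | h <;> rw [h] <;> norm_num

lemma walkT_abs_le (T : ℝ) (hT : 0 ≤ T + 1) : ∀ k m, |walkT T k m| ≤ T + 1 := by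
  intro k
  induction k with
  | zero => intro m; simpa [walkT_zero] using hT
  | succ k ih =>
      intro m
      rw [walkT]
      split_ifs with h
      · have h1 : |2 * ((m % 2 : ℕ) : ℝ) - 1| = 1 := by
          rcases Nat.mod_two_eq_zero_or_one m with h2 | h2 <;> rw [h2] <;> norm_num
        calc |walkT T k (m/2) + (2 * ((m % 2 : ℕ) : ℝ) - 1)|
            ≤ |walkT T k (m/2)| + |2 * ((m % 2 : ℕ) : ℝ) - 1| := abs_add_le _ _
          _ ≤ T + 1 := by rw [h1]; linarith
      · simpa using ih (m/2)

lemma alphaT_child_le (T : ℝ) (k m : ℕ) : alphaT T (k+1) m ≤ alphaT T k (m/2) := by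
  by_cases h : |walkT T k (m/2)| < T
  · rw [show alphaT T k (m/2) = 1 from if_pos h]
    exact alphaT_le_one T (k+1) m
  · have : walkT T (k+1) m = walkT T k (m/2) := by rw [walkT, if_neg h, add_zero]
    rw [show alphaT T (k+1) m = 0 from if_neg (by rw [this]; exact h),
        show alphaT T k (m/2) = 0 from if_neg h]
lemma floor_half {x : ℝ} (k : ℕ) : ⌊(2:ℝ)^(k+1) * x⌋₊ / 2 = ⌊(2:ℝ)^k * x⌋₊ := by
  have h : (2:ℝ)^(k+1) * x / ((2:ℕ):ℝ) = 2^k * x := by push_cast; ring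
  rw [← Nat.floor_div_natCast, h]

lemma haar_eq_zero {k m : ℕ} {x : ℝ} (hx0 : 0 ≤ x) (hm : m ≠ ⌊(2:ℝ)^k * x⌋₊) :
    haar k m x = 0 := by
  unfold haar
  rw [if_neg]
  rintro ⟨h1, h2⟩
  apply hm
  have h2pow : (0:ℝ) < 2^k := by positivity
  symm
  rw [Nat.floor_eq_iff (by positivity)]
  constructor
  · rw [div_le_iff₀ h2pow] at h1; linarith [h1]
  · rw [lt_div_iff₀ h2pow] at h2; linarith [h2]

lemma haar_floor {k : ℕ} {x : ℝ} (hx0 : 0 ≤ x) :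
    haar k ⌊(2:ℝ)^k * x⌋₊ x = 2 * ((⌊(2:ℝ)^(k+1) * x⌋₊ % 2 : ℕ) : ℝ) - 1 := by
  have h2pow : (0:ℝ) < 2^k := by positivity
  have h2pow' : (0:ℝ) < 2^(k+1) := by positivity
  set M := ⌊(2:ℝ)^k * x⌋₊ with hM
  set F := ⌊(2:ℝ)^(k+1) * x⌋₊ with hF
  have hFM : F / 2 = M := floor_half k
  have hM1 : (M:ℝ) ≤ 2^k * x := Nat.floor_le (by positivity)
  have hM2 : 2^k * x < M + 1 := Nat.lt_floor_add_one _
  have hF1 : (F:ℝ) ≤ 2^(k+1) * x := Nat.floor_le (by positivity)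
  have hF2 : 2^(k+1) * x < F + 1 := Nat.lt_floor_add_one _
  unfold haar
  rw [if_pos ⟨by rw [div_le_iff₀ h2pow]; linarith, by rw [lt_div_iff₀ h2pow]; linarith⟩]
  have hFeq : F = 2 * M + F % 2 := by omega
  rcases Nat.mod_two_eq_zero_or_one F with hr | hr
  · rw [if_pos, hr]
    · norm_num
    · rw [lt_div_iff₀ h2pow']
      have : (F:ℝ) = 2 * M := by rw [hFeq, hr]; push_cast; ring
      calc x * 2^(k+1) = 2^(k+1) * x := by ring
        _ < F + 1 := hF2
        _ = 2 * M + 1 := by rw [this]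
  · rw [if_neg, hr]
    · norm_num
    · rw [not_lt, div_le_iff₀ h2pow']
      have : (F:ℝ) = 2 * M + 1 := by rw [hFeq, hr]; push_cast; ring
      calc (2 * (M:ℝ) + 1) = F := this.symm
        _ ≤ 2^(k+1) * x := hF1
        _ = x * 2^(k+1) := by ring

lemma level_sum (T : ℝ) (k : ℕ) {x : ℝ} (hx : x ∈ Set.Ico (0:ℝ) 1) :
    ∑ m ∈ range (2^k), alphaT T k m * haar k m x
      = alphaT T k ⌊(2:ℝ)^k * x⌋₊ * (2 * ((⌊(2:ℝ)^(k+1) * x⌋₊ % 2 : ℕ) : ℝ) - 1) := by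
  have hmem : ⌊(2:ℝ)^k * x⌋₊ ∈ range (2^k) := by
    rw [Finset.mem_range, Nat.floor_lt (mul_nonneg (by positivity) hx.1)]
    push_cast
    calc (2:ℝ)^k * x < 2^k * 1 := by
          have := hx.2
          have h2pow : (0:ℝ) < 2^k := by positivity
          nlinarith
      _ = 2^k := mul_one _
  rw [Finset.sum_eq_single_of_mem _ hmem]
  · rw [haar_floor hx.1]
  · intro b _ hb
    rw [haar_eq_zero hx.1 hb, mul_zero]

lemma sum1_eval (T : ℝ) (n : ℕ) {x : ℝ} (hx : x ∈ Set.Ico (0:ℝ) 1) :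
    sum1 n (alphaT T) x = walkT T (n+1) ⌊(2:ℝ)^(n+1) * x⌋₊ := by
  have key : ∀ j, ∑ k ∈ range j, ∑ m ∈ range (2^k), alphaT T k m * haar k m x
      = walkT T j ⌊(2:ℝ)^j * x⌋₊ := by
    intro j
    induction j with
    | zero => simp [walkT_zero]
    | succ j ih =>
        rw [Finset.sum_range_succ, ih, level_sum T j hx, walkT_succ, floor_half j]
  exact key (n+1)

lemma sum_range_two_mul (N : ℕ) (f : ℕ → ℝ) :
    ∑ m ∈ range (2*N), f m = ∑ m ∈ range N, (f (2*m) + f (2*m+1)) := by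
  induction N with
  | zero => simp
  | succ N ih =>
      have h : 2*(N+1) = (2*N) + 1 + 1 := by ring
      rw [h, Finset.sum_range_succ, Finset.sum_range_succ, Finset.sum_range_succ, ih,
        add_assoc]

noncomputable def Aseq (T : ℝ) (k : ℕ) : ℝ := ∑ m ∈ range (2^k), alphaT T k m * ((2:ℝ)^k)⁻¹

noncomputable def Qseq (T : ℝ) (k : ℕ) : ℝ := ∑ m ∈ range (2^k), (walkT T k m)^2 * ((2:ℝ)^k)⁻¹

lemma pow_succ_two (k : ℕ) : 2^(k+1) = 2 * 2^k := by ring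

lemma walkT_even (T : ℝ) (k m : ℕ) :
    walkT T (k+1) (2*m) = walkT T k m - alphaT T k m := by
  rw [walkT_succ]
  have h1 : 2*m/2 = m := by omega
  have h2 : (2*m) % 2 = 0 := by omega
  rw [h1, h2]; push_cast; ring

lemma walkT_odd (T : ℝ) (k m : ℕ) :
    walkT T (k+1) (2*m+1) = walkT T k m + alphaT T k m := by
  rw [walkT_succ]
  have h1 : (2*m+1)/2 = m := by omega
  have h2 : (2*m+1) % 2 = 1 := by omega
  rw [h1, h2]; push_cast; ring

lemma Qseq_succ (T : ℝ) (k : ℕ) : Qseq T (k+1) = Qseq T k + Aseq T k := by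
  unfold Qseq Aseq
  rw [pow_succ_two, sum_range_two_mul, ← Finset.sum_add_distrib]
  apply Finset.sum_congr rfl
  intro m _
  rw [walkT_even, walkT_odd,
    show ((2:ℝ)^(k+1))⁻¹ = 2⁻¹ * ((2:ℝ)^k)⁻¹ by rw [pow_succ, mul_inv, mul_comm]]
  have ha : alphaT T k m ^2 = alphaT T k m := alphaT_sq T k m
  linear_combination ((2:ℝ)^k)⁻¹ * ha

lemma Aseq_succ_le (T : ℝ) (k : ℕ) : Aseq T (k+1) ≤ Aseq T k := by
  unfold Aseq
  rw [pow_succ_two, sum_range_two_mul]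
  apply Finset.sum_le_sum
  intro m _
  have he : 2*m/2 = m := by omega
  have ho : (2*m+1)/2 = m := by omega
  have h1 := alphaT_child_le T k (2*m)
  have h2 := alphaT_child_le T k (2*m+1)
  rw [he] at h1; rw [ho] at h2
  rw [show ((2:ℝ)^(k+1))⁻¹ = 2⁻¹ * ((2:ℝ)^k)⁻¹ by rw [pow_succ, mul_inv, mul_comm]]
  have hq : (0:ℝ) ≤ 2⁻¹ * ((2:ℝ)^k)⁻¹ := by positivity
  nlinarith [mul_le_mul_of_nonneg_right h1 hq, mul_le_mul_of_nonneg_right h2 hq]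

lemma Aseq_antitone (T : ℝ) : Antitone (Aseq T) := by
  apply antitone_nat_of_succ_le
  exact Aseq_succ_le T

lemma Qseq_eq (T : ℝ) (j : ℕ) : Qseq T j = ∑ k ∈ range j, Aseq T k := by
  induction j with
  | zero => simp [Qseq, walkT_zero]
  | succ j ih => rw [Qseq_succ, ih, Finset.sum_range_succ]

lemma sum_inv_pow (k : ℕ) : ∑ _m ∈ range (2^k), ((2:ℝ)^k)⁻¹ = 1 := by
  rw [Finset.sum_const, Finset.card_range, nsmul_eq_mul]
  push_cast
  rw [mul_inv_cancel₀ (by positivity)]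

lemma Aseq_le_one (T : ℝ) (k : ℕ) : Aseq T k ≤ 1 := by
  rw [← sum_inv_pow k]
  apply Finset.sum_le_sum
  intro m _
  have := alphaT_le_one T k m
  have hp : (0:ℝ) ≤ ((2:ℝ)^k)⁻¹ := by positivity
  nlinarith

lemma Aseq_nonneg (T : ℝ) (k : ℕ) : 0 ≤ Aseq T k := by
  apply Finset.sum_nonneg
  intro m _
  exact mul_nonneg (alphaT_nonneg T k m) (by positivity)

lemma cheb (T : ℝ) (hT : 0 ≤ T) (k : ℕ) : (1 - Aseq T k) * T^2 ≤ Qseq T k := by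
  unfold Aseq Qseq
  rw [← sum_inv_pow k, ← Finset.sum_sub_distrib, Finset.sum_mul]
  apply Finset.sum_le_sum
  intro m _
  have hp : (0:ℝ) ≤ ((2:ℝ)^k)⁻¹ := by positivity
  by_cases h : |walkT T k m| < T
  · rw [show alphaT T k m = 1 from if_pos h]
    have : (0:ℝ) ≤ walkT T k m ^2 := sq_nonneg _
    nlinarith
  · rw [show alphaT T k m = 0 from if_neg h]
    have h2 : T ≤ |walkT T k m| := not_lt.1 h
    have h3 : T^2 ≤ walkT T k m ^2 := by
      nlinarith [mul_self_le_mul_self hT h2, sq_abs (walkT T k m)]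
    nlinarith

lemma weight_bound {n : ℕ} (hn : 27 ≤ n) :
    (n:ℝ) ≤ 2 * ∑ k ∈ range (n+1), Aseq ((n:ℝ)^((2:ℝ)/3) - 1) k := by
  set u : ℝ := (n:ℝ)^((1:ℝ)/3) with hu
  have hn0 : (0:ℝ) ≤ n := Nat.cast_nonneg n
  have hu0 : 0 ≤ u := Real.rpow_nonneg hn0 _
  have hu3 : u^(3:ℕ) = (n:ℝ) := by
    rw [hu, ← Real.rpow_natCast _ 3, ← Real.rpow_mul hn0]
    norm_num
  have hu2 : (n:ℝ)^((2:ℝ)/3) = u^(2:ℕ) := by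
    rw [hu, ← Real.rpow_natCast _ 2, ← Real.rpow_mul hn0]
    norm_num
  have hn27 : (27:ℝ) ≤ (n:ℝ) := by exact_mod_cast hn
  have hu_ge : 3 ≤ u := by nlinarith [sq_nonneg (u-3), sq_nonneg (u+3), sq_nonneg u]
  set T : ℝ := (n:ℝ)^((2:ℝ)/3) - 1 with hT
  have hT0 : 0 ≤ T := by rw [hT, hu2]; nlinarith
  have hTsq : (n:ℝ) + 1 ≤ T^2 := by
    rw [hT, hu2, ← hu3]; nlinarith
  set A := Aseq T (n+1) with hA
  set W := ∑ k ∈ range (n+1), Aseq T k with hW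
  have hA0 : 0 ≤ A := Aseq_nonneg T (n+1)
  have hA1 : A ≤ 1 := Aseq_le_one T (n+1)
  have h1 : ((n:ℝ)+1) * A ≤ W := by
    have : ∑ _k ∈ range (n+1), A ≤ W := by
      apply Finset.sum_le_sum
      intro k hk
      exact Aseq_antitone T (by have := Finset.mem_range.1 hk; omega : k ≤ n+1)
    calc ((n:ℝ)+1) * A = ∑ _k ∈ range (n+1), A := by
          rw [Finset.sum_const, Finset.card_range, nsmul_eq_mul]; push_cast; ring
      _ ≤ W := this
  have h2 : (1 - A) * T^2 ≤ W := by
    calc (1 - A) * T^2 ≤ Qseq T (n+1) := cheb T hT0 (n+1)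
      _ = W := Qseq_eq T (n+1)
  have h3 : (1 - A) * ((n:ℝ)+1) ≤ (1 - A) * T^2 :=
    mul_le_mul_of_nonneg_left hTsq (by linarith)
  nlinarith

lemma gen_sup_le (n : ℕ) :
    sSup ((fun x => |sum1 n (alphaT ((n:ℝ)^((2:ℝ)/3) - 1)) x|) '' Set.Ico (0:ℝ) 1)
      ≤ (n:ℝ)^((2:ℝ)/3) := by
  set T : ℝ := (n:ℝ)^((2:ℝ)/3) - 1 with hT
  have hpow : 0 ≤ (n:ℝ)^((2:ℝ)/3) := Real.rpow_nonneg (Nat.cast_nonneg n) _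
  have hT1 : T + 1 = (n:ℝ)^((2:ℝ)/3) := by rw [hT]; ring
  apply Real.sSup_le _ hpow
  rintro y ⟨x, hx, rfl⟩
  simp only
  rw [sum1_eval T n hx]
  calc |walkT T (n+1) ⌊(2:ℝ)^(n+1) * x⌋₊| ≤ T + 1 :=
        walkT_abs_le T (by rw [hT1]; exact hpow) (n+1) _
    _ = (n:ℝ)^((2:ℝ)/3) := hT1

lemma gen_weight_eq (T : ℝ) (n : ℕ) :
    ∑ k ∈ Finset.range (n + 1), ∑ m ∈ Finset.range (2 ^ k),
      |alphaT T k m| * ((2 : ℝ) ^ k)⁻¹ = ∑ k ∈ range (n+1), Aseq T k := by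
  apply Finset.sum_congr rfl
  intro k _
  apply Finset.sum_congr rfl
  intro m _
  rw [abs_alphaT]

lemma part2 : ∃ c : ℝ, 0 < c ∧ ∀ n : ℕ, ∃ α : ℕ → ℕ → ℝ,
    (∀ k m, α k m = 0 ∨ α k m = 1) ∧
    sSup ((fun x => |sum1 n α x|) '' Set.Ico (0 : ℝ) 1) ≤ (n : ℝ) ^ ((2 : ℝ) / 3) ∧
    (∑ k ∈ Finset.range (n + 1), ∑ m ∈ Finset.range (2 ^ k),
      |α k m| * ((2 : ℝ) ^ k)⁻¹) ≥ c * n := by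
  refine ⟨1/27, by norm_num, fun n => ?_⟩
  by_cases hbig : 27 ≤ n ∨ n = 0
  · -- general construction
    set T : ℝ := (n:ℝ)^((2:ℝ)/3) - 1 with hT
    refine ⟨alphaT T, fun k m => alphaT_cases T k m, gen_sup_le n, ?_⟩
    rw [gen_weight_eq]
    rcases hbig with hbig | rfl
    · have := weight_bound hbig
      linarith
    · simp only [Nat.cast_zero, mul_zero]
      apply Finset.sum_nonneg
      intro k _
      exact Aseq_nonneg T k
  · -- special construction: single Haar function
    push_neg at hbig
    obtain ⟨hlt, hne⟩ := hbig
    have hn1 : 1 ≤ n := Nat.one_le_iff_ne_zero.2 hne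
    refine ⟨fun k _ => if k = 0 then 1 else 0, ?_, ?_, ?_⟩
    · intro k m; simp only; split_ifs <;> simp
    · apply Real.sSup_le _ (Real.rpow_nonneg (Nat.cast_nonneg n) _)
      rintro y ⟨x, hx, rfl⟩
      simp only
      have hev : sum1 n (fun k _ => if k = 0 then 1 else 0) x = haar 0 0 x := by
        unfold sum1
        rw [Finset.sum_eq_single_of_mem 0 (Finset.mem_range.2 (by omega))]
        · simp
        · intro k _ hk; simp [hk]
      rw [hev]
      have h1 : |haar 0 0 x| ≤ 1 := by
        unfold haar; split_ifs <;> simp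
      calc |haar 0 0 x| ≤ 1 := h1
        _ = (1:ℝ)^((2:ℝ)/3) := (Real.one_rpow _).symm
        _ ≤ (n:ℝ)^((2:ℝ)/3) := by
            apply Real.rpow_le_rpow (by norm_num) (by exact_mod_cast hn1) (by norm_num)
    · rw [Finset.sum_eq_single_of_mem 0 (Finset.mem_range.2 (by omega))]
      · simp only [if_pos rfl]
        have hn26 : (n:ℝ) ≤ 26 := by exact_mod_cast Nat.le_of_lt_succ hlt
        simp only [pow_zero, inv_one, abs_one, mul_one, Finset.sum_const,
          Finset.card_range, nsmul_eq_mul]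
        norm_num
        linarith
      · intro k _ hk; simp [hk]

theorem one_dim_estimate_fails :
    (¬ ∃ C : ℝ, 0 < C ∧ ∀ n : ℕ, ∀ α : ℕ → ℕ → ℝ,
      (∀ k m, α k m = 0 ∨ α k m = 1) →
      sSup ((fun x => |sum1 n α x|) '' Set.Ico (0 : ℝ) 1)
        ≥ C * ∑ k ∈ Finset.range (n + 1), ∑ m ∈ Finset.range (2 ^ k),
            |α k m| * ((2 : ℝ) ^ k)⁻¹) ∧
    (∃ c : ℝ, 0 < c ∧ ∀ n : ℕ, ∃ α : ℕ → ℕ → ℝ,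
      (∀ k m, α k m = 0 ∨ α k m = 1) ∧
      sSup ((fun x => |sum1 n α x|) '' Set.Ico (0 : ℝ) 1) ≤ (n : ℝ) ^ ((2 : ℝ) / 3) ∧
      (∑ k ∈ Finset.range (n + 1), ∑ m ∈ Finset.range (2 ^ k),
        |α k m| * ((2 : ℝ) ^ k)⁻¹) ≥ c * n) := by
  obtain ⟨c, hc, hcon⟩ := part2
  constructor
  · rintro ⟨C, hC, H⟩
    have hCc : 0 < C * c := mul_pos hC hc
    set B : ℝ := 1 / (C * c) with hB
    have hB0 : 0 < B := by positivity
    set n : ℕ := ⌈B^3⌉₊ + 1 with hn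
    have hn0 : (0:ℝ) < n := by positivity
    have hBn : B^3 < (n:ℝ) := by
      calc B^3 ≤ (⌈B^3⌉₊ : ℝ) := Nat.le_ceil _
        _ < (n:ℝ) := by rw [hn]; push_cast; linarith
    have hthird : B < (n:ℝ)^((1:ℝ)/3) := by
      have h1 : B = (B^(3:ℕ))^((1:ℝ)/3) := by
        rw [← Real.rpow_natCast B 3, ← Real.rpow_mul hB0.le]
        norm_num
      rw [h1]
      apply Real.rpow_lt_rpow (by positivity) (by exact_mod_cast hBn) (by norm_num)
    have hone : 1 < (n:ℝ)^((1:ℝ)/3) * (C * c) := by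
      rw [hB, div_lt_iff₀ hCc] at hthird
      exact hthird
    obtain ⟨α, hval, hsup, hwt⟩ := hcon n
    have hH := H n α hval
    have hp23 : 0 < (n:ℝ)^((2:ℝ)/3) := Real.rpow_pos_of_pos hn0 _
    have hsplit : (n:ℝ) = (n:ℝ)^((1:ℝ)/3) * (n:ℝ)^((2:ℝ)/3) := by
      rw [← Real.rpow_add hn0]
      norm_num
    have e1 : C * (c * n) ≤ C * _ := mul_le_mul_of_nonneg_left hwt hC.le
    have e2 : C * (c * n) ≤ (n:ℝ)^((2:ℝ)/3) := le_trans e1 (le_trans hH hsup)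
    rw [hsplit] at e2
    have e6 : 0 < ((n:ℝ)^((1:ℝ)/3) * (C * c) - 1) * (n:ℝ)^((2:ℝ)/3) :=
      mul_pos (sub_pos.2 hone) hp23
    nlinarith [e2, e6]
  · exact ⟨c, hc, hcon⟩
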